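/- arXiv:2204.05594 — 3 statements merged into one kernel-verified Lean document; each statement's English description precedes it below -/
import Mathlib

section
/- Let B be a finite-dimensional algebra over an algebraically closed field K, and let I₁,…,I_k be ideals of B with Ĩ = I₁+⋯+I_k. The function λ : B/I₁ × ⋯ × B/I_k → ℤ_{≥0} sending (y₁,…,y_k) to dim_K(B/(Ĩ + ⟨y₁,…,y_k⟩)) is upper semicontinuous with respect to the Zariski topology on B/I₁ × ⋯ × B/I_k viewed as an affine variety. -/
/-- A subset of a `K`-module `V` is Zariski closed if it is the common zero locus of a family
of polynomial functions on `V`, i.e. of elements of the subalgebra of `V → K` generated by the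
linear functionals. -/
def IsZariskiClosed (K : Type*) {V : Type*} [CommRing K] [AddCommGroup V] [Module K V]
    (s : Set V) : Prop :=
  ∃ S : Set (V → K),
    (∀ f ∈ S, f ∈ Algebra.adjoin K {g : V → K | ∃ φ : Module.Dual K V, g = ⇑φ}) ∧
    s = {v | ∀ f ∈ S, f v = 0}

open Module Set Matrix

theorem rank_le_iff_minors' (K : Type*) [Field K] {V : Type*} [AddCommGroup V] [Module K V]
    {n : ℕ} (e : Basis (Fin n) K V) {ι : Type*} [Fintype ι] (v : ι → V) (d : ℕ) :
    Module.finrank K (Submodule.span K (Set.range v)) ≤ d ↔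
      ∀ (r : Fin (d + 1) → ι) (cc : Fin (d + 1) → Fin n),
        (Matrix.of fun a b => e.repr (v (r a)) (cc b)).det = 0 := by
  classical
  have : FiniteDimensional K V := Module.Finite.of_basis e
  constructor
  · intro h r cc
    by_contra hdet
    have hM : IsUnit (Matrix.of fun a b => e.repr (v (r a)) (cc b)) := by
      rw [Matrix.isUnit_iff_isUnit_det]
      exact isUnit_iff_ne_zero.mpr hdet
    have hrows : LinearIndependent K
        (fun a => (Matrix.of fun a b => e.repr (v (r a)) (cc b)) a) :=
      Matrix.linearIndependent_rows_iff_isUnit.mpr hM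
    -- rows are P ∘ (v ∘ r) for linear map P
    set P : V →ₗ[K] (Fin (d + 1) → K) :=
      LinearMap.pi fun b => e.coord (cc b) with hP
    have hcomp : (fun a => (Matrix.of fun a b => e.repr (v (r a)) (cc b)) a)
        = P ∘ (v ∘ r) := by
      funext a; funext b; rfl
    rw [hcomp] at hrows
    have hvr : LinearIndependent K (v ∘ r) := hrows.of_comp P
    have h1 : Module.finrank K (Submodule.span K (Set.range (v ∘ r))) = d + 1 := by
      rw [finrank_span_eq_card hvr, Fintype.card_fin]
    have h2 : Submodule.span K (Set.range (v ∘ r)) ≤ Submodule.span K (Set.range v) :=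
      Submodule.span_mono (Set.range_comp_subset_range r v)
    have := Submodule.finrank_mono h2
    omega
  · intro h
    by_contra hle
    push_neg at hle
    -- get d+1 linearly independent vectors among v
    obtain ⟨t, hts, hspan, hli⟩ := exists_linearIndependent K (Set.range v)
    have htfin : t.Finite := (Set.finite_range v).subset hts
    have := htfin.fintype
    have hcard : d + 1 ≤ t.toFinset.card := by
      have := finrank_span_set_eq_card hli
      rw [hspan] at this
      omega
    obtain ⟨g⟩ : Nonempty (Fin (d + 1) ↪ t) := by
      apply Function.Embedding.nonempty_of_card_le
      simpa [Set.toFinset_card] using hcard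
    have hg : LinearIndependent K (fun a : Fin (d+1) => ((g a : V))) :=
      hli.comp g g.injective
    have hsel : ∀ a : Fin (d+1), ∃ i : ι, v i = (g a : V) := fun a => hts (g a).2
    choose r hr using hsel
    set u : Fin (d+1) → V := fun a => v (r a) with hu
    have hu_li : LinearIndependent K u := by
      have : u = fun a => ((g a : V)) := funext fun a => hr a
      rw [this]; exact hg
    -- matrix of coordinates
    set M : Matrix (Fin (d+1)) (Fin n) K := Matrix.of fun a b => e.repr (u a) b with hM
    have hMrows : LinearIndependent K (fun a => M a) := by
      have : (fun a => M a) = ⇑e.equivFun ∘ u := by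
        funext a; funext b; rfl
      rw [this]
      exact hu_li.map' e.equivFun.toLinearMap e.equivFun.ker
    have hrank : M.rank = d + 1 := by
      rw [hMrows.rank_matrix, Fintype.card_fin]
    have hcols : Module.finrank K (Submodule.span K (Set.range Mᵀ)) = d + 1 := by
      exact (Matrix.rank_eq_finrank_span_cols M).symm.trans hrank
    obtain ⟨t', ht's, ht'span, ht'li⟩ := exists_linearIndependent K (Set.range Mᵀ)
    have ht'fin : t'.Finite := (Set.finite_range Mᵀ).subset ht's
    have := ht'fin.fintype
    have ht'card : t'.toFinset.card = d + 1 := by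
      have := finrank_span_set_eq_card ht'li
      rw [ht'span, hcols] at this
      omega
    obtain ⟨g'⟩ : Nonempty (Fin (d + 1) ↪ t') := by
      apply Function.Embedding.nonempty_of_card_le
      simp [Set.toFinset_card] at ht'card ⊢
      omega
    have hsel' : ∀ a : Fin (d+1), ∃ b : Fin n, Mᵀ b = (g' a : Fin (d+1) → K) :=
      fun a => ht's (g' a).2
    choose cc hcc using hsel'
    have hccli : LinearIndependent K (fun b => Mᵀ (cc b)) := by
      have : (fun b => Mᵀ (cc b)) = fun b => ((g' b : Fin (d+1) → K)) :=
        funext fun b => hcc b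
      rw [this]
      exact ht'li.comp g' g'.injective
    set N : Matrix (Fin (d+1)) (Fin (d+1)) K := Matrix.of fun a b => e.repr (u a) (cc b) with hN
    have hNcols : LinearIndependent K (fun b => Nᵀ b) := by
      have : (fun b => Nᵀ b) = fun b => Mᵀ (cc b) := by
        funext b; funext a; rfl
      rw [this]; exact hccli
    have : IsUnit N := Matrix.linearIndependent_cols_iff_isUnit.mp hNcols
    have hdet : N.det ≠ 0 := by
      intro h0
      rw [Matrix.isUnit_iff_isUnit_det, h0] at this
      exact this.ne_zero rfl
    exact hdet (h r cc)

theorem mul_mem_span_mul' (K B : Type*) [Field K] [CommRing B] [Algebra K B] {n : ℕ}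
    (e : Basis (Fin n) K B) (b x : B) :
    b * x ∈ Submodule.span K (Set.range fun i => b * e i) := by
  have hx : b * x = ∑ i, e.repr x i • (b * e i) := by
    conv_lhs => rw [← e.sum_repr x]
    rw [Finset.mul_sum]
    exact Finset.sum_congr rfl fun i _ => (mul_smul_comm _ _ _)
  rw [hx]
  exact Submodule.sum_mem _ fun i _ =>
    Submodule.smul_mem _ _ (Submodule.subset_span ⟨i, rfl⟩)

theorem det_mem_adjoin' {K S : Type*} [CommRing K] [CommRing S] [Algebra K S]
    (A : Subalgebra K S) {d : ℕ} (M : Matrix (Fin d) (Fin d) S)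
    (h : ∀ a b, M a b ∈ A) : M.det ∈ A := by
  rw [Matrix.det_apply]
  apply sum_mem
  intro σ _
  rw [Units.smul_def]
  apply zsmul_mem
  apply prod_mem
  intro i _
  exact h _ _

/-- Lemma 2.7 (basic semicontinuity): for a finite-dimensional algebra `B` over an algebraically
closed field `K` and ideals `I₁, …, I_k` with `Ĩ = I₁ + ⋯ + I_k`, the function
`(y₁,…,y_k) ↦ dim_K (B / (Ĩ + ⟨y₁,…,y_k⟩))` on `B/I₁ × ⋯ × B/I_k` is upper semicontinuous in
the Zariski topology, i.e. each superlevel set `{y | λ(y) ≥ c}` is Zariski closed. -/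
theorem length_upper_semicontinuous (K B : Type*) [Field K] [IsAlgClosed K] [CommRing B]
    [Algebra K B] [Module.Finite K B] (k : ℕ) (I : Fin k → Ideal B) (c : ℕ) :
    IsZariskiClosed K
      {y : ∀ j : Fin k, B ⧸ I j |
        c ≤ Module.finrank K
          (B ⧸ ((⨆ j, I j) +
            Ideal.span {b : B | ∃ j : Fin k, Ideal.Quotient.mk (I j) b = y j}))} := by
  classical
  set n := Module.finrank K B with hn
  set e : Basis (Fin n) K B := Module.finBasis K B with he
  -- linear sections of the quotient maps
  have hsx : ∀ j : Fin k, ∃ s : (B ⧸ I j) →ₗ[K] B,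
      ∀ x, Ideal.Quotient.mk (I j) (s x) = x := by
    intro j
    obtain ⟨s, hs⟩ := (Ideal.Quotient.mkₐ K (I j)).toLinearMap.exists_rightInverse_of_surjective
      (LinearMap.range_eq_top.mpr (Ideal.Quotient.mkₐ_surjective K (I j)))
    exact ⟨s, fun x => LinearMap.congr_fun hs x⟩
  choose s hsec using hsx
  set Itil : Ideal B := ⨆ j, I j with hItil
  set ItK : Submodule K B := Itil.restrictScalars K with hItK
  set m := Module.finrank K ItK with hm
  set t : Basis (Fin m) K ItK := Module.finBasis K ItK with ht
  set w : (∀ j : Fin k, B ⧸ I j) → (Fin m ⊕ Fin k × Fin n) → B := fun y =>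
    Sum.elim (fun i => (t i : B)) (fun q => s q.1 (y q.1) * e q.2) with hw
  -- key identification of spans
  have hkey : ∀ y : ∀ j : Fin k, B ⧸ I j, Submodule.span K (Set.range (w y)) =
      Submodule.restrictScalars K
        (Itil + Ideal.span {b : B | ∃ j : Fin k, Ideal.Quotient.mk (I j) b = y j}) := by
    intro y
    have hIt : ∀ x ∈ ItK, x ∈ Submodule.span K (Set.range (w y)) := by
      intro x hx
      have h1 : (⟨x, hx⟩ : ItK) ∈ Submodule.span K (Set.range t) := by
        rw [t.span_eq]; trivial
      have h2 : x ∈ Submodule.map ItK.subtype (Submodule.span K (Set.range t)) :=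
        ⟨_, h1, rfl⟩
      rw [Submodule.map_span] at h2
      refine Submodule.span_mono ?_ h2
      rintro z ⟨_, ⟨i, rfl⟩, rfl⟩
      exact ⟨Sum.inl i, rfl⟩
    apply le_antisymm
    · rw [Submodule.span_le]
      rintro x ⟨p, rfl⟩
      rcases p with i | ⟨j, i⟩
      · show w y (Sum.inl i) ∈ Itil + Ideal.span _
        rw [Submodule.add_eq_sup]
        exact Submodule.mem_sup_left (t i).2
      · show w y (Sum.inr (j, i)) ∈ Itil + Ideal.span _
        rw [Submodule.add_eq_sup]
        have h1 : s j (y j) ∈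
            Ideal.span {b : B | ∃ j' : Fin k, Ideal.Quotient.mk (I j') b = y j'} :=
          Ideal.subset_span ⟨j, hsec j (y j)⟩
        exact Ideal.mul_mem_right _ _ (Submodule.mem_sup_right h1)
    · intro x hx
      rw [Submodule.restrictScalars_mem] at hx
      have hJ' : Itil + Ideal.span {b : B | ∃ j : Fin k, Ideal.Quotient.mk (I j) b = y j}
          ≤ Itil ⊔ Ideal.span (Set.range fun j => s j (y j)) := by
        rw [Submodule.add_eq_sup]
        apply sup_le le_sup_left
        rw [Ideal.span_le]
        rintro b ⟨j, hb⟩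
        have hdiff : b - s j (y j) ∈ I j :=
          Ideal.Quotient.eq.mp (hb.trans (hsec j (y j)).symm)
        have h1 : b - s j (y j) ∈ Itil := (le_iSup I j) hdiff
        have h2 : s j (y j) ∈ Ideal.span (Set.range fun j => s j (y j)) :=
          Ideal.subset_span ⟨j, rfl⟩
        have h3 := add_mem (Submodule.mem_sup_left (S := Itil) h1)
          (Submodule.mem_sup_right (S := Itil) h2)
        simpa using h3
      obtain ⟨a, ha, b2, hb2, rfl⟩ := Submodule.mem_sup.mp (hJ' hx)
      apply add_mem (hIt a ha)
      rw [Ideal.span, Submodule.mem_span_range_iff_exists_fun] at hb2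
      obtain ⟨cf, rfl⟩ := hb2
      apply Submodule.sum_mem
      intro j _
      rw [smul_eq_mul, mul_comm]
      refine Submodule.span_mono ?_ (mul_mem_span_mul' K B e (s j (y j)) (cf j))
      rintro z ⟨i, rfl⟩
      exact ⟨Sum.inr (j, i), rfl⟩
  -- finrank bookkeeping
  have hq : ∀ y : ∀ j : Fin k, B ⧸ I j,
      Module.finrank K
        (B ⧸ (Itil + Ideal.span {b : B | ∃ j : Fin k, Ideal.Quotient.mk (I j) b = y j}))
        + Module.finrank K (Submodule.span K (Set.range (w y))) = n := by
    intro y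
    rw [hkey y]
    set Jy := Itil + Ideal.span {b : B | ∃ j : Fin k, Ideal.Quotient.mk (I j) b = y j}
    have e1 : Module.finrank K (B ⧸ Submodule.restrictScalars K Jy)
        = Module.finrank K (B ⧸ Jy) :=
      (Submodule.Quotient.restrictScalarsEquiv K Jy).finrank_eq
    rw [← e1]
    exact Submodule.finrank_quotient_add_finrank _
  by_cases hc : c ≤ n
  · -- main case
    set d := n - c with hd
    refine ⟨{F | ∃ (r : Fin (d + 1) → Fin m ⊕ Fin k × Fin n) (cc : Fin (d + 1) → Fin n),
        F = fun y => (Matrix.of fun a b => e.repr (w y (r a)) (cc b)).det}, ?_, ?_⟩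
    · rintro F ⟨r, cc, rfl⟩
      set A := Algebra.adjoin K {g : (∀ j : Fin k, B ⧸ I j) → K |
        ∃ φ : Module.Dual K (∀ j : Fin k, B ⧸ I j), g = ⇑φ} with hA
      set Efun : Matrix (Fin (d + 1)) (Fin (d + 1)) ((∀ j : Fin k, B ⧸ I j) → K) :=
        Matrix.of fun a b => fun y => e.repr (w y (r a)) (cc b) with hE
      have hfe : (fun y => (Matrix.of fun a b => e.repr (w y (r a)) (cc b)).det)
          = Efun.det := by
        funext y
        exact (RingHom.map_det (Pi.evalRingHom (fun _ => K) y) Efun).symm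
      rw [hfe]
      apply det_mem_adjoin'
      intro a b
      rcases hra : r a with i | ⟨j, i⟩
      · have : Efun a b = algebraMap K _ (e.repr ((t i : B)) (cc b)) := by
          funext y
          simp only [hE, Matrix.of_apply, hra, hw, Sum.elim_inl]
          rfl
        rw [this]
        exact Subalgebra.algebraMap_mem A _
      · have : Efun a b =
            ⇑((e.coord (cc b)) ∘ₗ (LinearMap.mulRight K (e i)) ∘ₗ (s j)
              ∘ₗ (LinearMap.proj j)) := by
          funext y
          simp only [hE, Matrix.of_apply, hra, hw, Sum.elim_inr, LinearMap.coe_comp,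
            Function.comp_apply, LinearMap.proj_apply, LinearMap.mulRight_apply,
            Basis.coord_apply]
        rw [this]
        exact Algebra.subset_adjoin ⟨_, rfl⟩
    · ext y
      simp only [Set.mem_setOf_eq]
      have h1 : c ≤ Module.finrank K
          (B ⧸ (Itil + Ideal.span {b : B | ∃ j : Fin k, Ideal.Quotient.mk (I j) b = y j}))
          ↔ Module.finrank K (Submodule.span K (Set.range (w y))) ≤ d := by
        have := hq y
        omega
      rw [h1, rank_le_iff_minors' K e (w y) d]
      constructor
      · rintro h F ⟨r, cc, rfl⟩
        exact h r cc
      · intro h r cc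
        exact h _ ⟨r, cc, rfl⟩
  · -- degenerate case: the set is empty
    refine ⟨{fun _ => (1 : K)}, ?_, ?_⟩
    · rintro f rfl
      exact Subalgebra.one_mem _
    · ext y
      simp only [Set.mem_setOf_eq, Set.mem_singleton_iff]
      constructor
      · intro h
        have := hq y
        omega
      · intro h
        have : (1 : K) = 0 := h _ rfl
        exact absurd this one_ne_zero
end

section
/- Algebraic m-adically closed (AmAC) classes are closed under countable intersection: if P^j = lim← P^j_i for j = 1,2,… are AmAC classes in B = K[[x₁,…,x_n]]/I, then ⋂_j P^j = lim← (⋂_{j ≤ i} P^j_i), and in particular the countable intersection is again an inverse limit of constructible subsets of the quotients B/m^i. -/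
/-- A subset is Zariski constructible if it is a finite union of differences of Zariski closed
sets. -/
def IsZariskiConstructible (K : Type*) {V : Type*} [CommRing K] [AddCommGroup V] [Module K V]
    (s : Set V) : Prop :=
  ∃ (n : ℕ) (C D : Fin n → Set V),
    (∀ i, IsZariskiClosed K (C i) ∧ IsZariskiClosed K (D i)) ∧ s = ⋃ i, C i \ D i

section Aux

variable {K V : Type*} [Field K] [AddCommGroup V] [Module K V]

lemma IsZariskiClosed.inter {s t : Set V} (hs : IsZariskiClosed K s)
    (ht : IsZariskiClosed K t) : IsZariskiClosed K (s ∩ t) := by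
  obtain ⟨S, hS, rfl⟩ := hs
  obtain ⟨T, hT, rfl⟩ := ht
  refine ⟨S ∪ T, ?_, ?_⟩
  · rintro f (hf | hf)
    exacts [hS f hf, hT f hf]
  · ext v
    simp only [Set.mem_inter_iff, Set.mem_setOf_eq, Set.mem_union]
    constructor
    · rintro ⟨h1, h2⟩ f (hf | hf)
      exacts [h1 f hf, h2 f hf]
    · intro h
      exact ⟨fun f hf => h f (Or.inl hf), fun f hf => h f (Or.inr hf)⟩

lemma IsZariskiClosed.union {s t : Set V} (hs : IsZariskiClosed K s)
    (ht : IsZariskiClosed K t) : IsZariskiClosed K (s ∪ t) := by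
  obtain ⟨S, hS, rfl⟩ := hs
  obtain ⟨T, hT, rfl⟩ := ht
  refine ⟨{h | ∃ f ∈ S, ∃ g ∈ T, h = f * g}, ?_, ?_⟩
  · rintro h ⟨f, hf, g, hg, rfl⟩
    exact mul_mem (hS f hf) (hT g hg)
  · ext v
    simp only [Set.mem_union, Set.mem_setOf_eq]
    constructor
    · rintro (h | h) h' ⟨f, hf, g, hg, rfl⟩ <;> simp only [Pi.mul_apply]
      · rw [h f hf, zero_mul]
      · rw [h g hg, mul_zero]
    · intro h
      by_contra hc
      push_neg at hc
      obtain ⟨⟨f, hf, hfv⟩, ⟨g, hg, hgv⟩⟩ := hc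
      exact mul_ne_zero hfv hgv (h (f * g) ⟨f, hf, g, hg, rfl⟩)

lemma IsZariskiConstructible.univ : IsZariskiConstructible K (Set.univ : Set V) := by
  refine ⟨1, fun _ => Set.univ, fun _ => ∅, fun i => ⟨⟨∅, by simp, by simp⟩,
    ⟨{fun _ => (1 : K)}, ?_, by simp⟩⟩, by simp [Set.iUnion_const]⟩
  rintro f rfl
  exact one_mem _

lemma IsZariskiConstructible.inter {s t : Set V} (hs : IsZariskiConstructible K s)
    (ht : IsZariskiConstructible K t) : IsZariskiConstructible K (s ∩ t) := by
  obtain ⟨n, C, D, hCD, rfl⟩ := hs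
  obtain ⟨m, C', D', hCD', rfl⟩ := ht
  refine ⟨n * m, fun k => C (finProdFinEquiv.symm k).1 ∩ C' (finProdFinEquiv.symm k).2,
    fun k => D (finProdFinEquiv.symm k).1 ∪ D' (finProdFinEquiv.symm k).2, fun k =>
    ⟨((hCD _).1).inter ((hCD' _).1), ((hCD _).2).union ((hCD' _).2)⟩, ?_⟩
  ext v
  simp only [Set.mem_inter_iff, Set.mem_iUnion, Set.mem_diff, Set.mem_union]
  constructor
  · rintro ⟨⟨i, hi1, hi2⟩, ⟨k, hk1, hk2⟩⟩
    refine ⟨finProdFinEquiv (i, k), ?_⟩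
    simp only [Equiv.symm_apply_apply]
    exact ⟨⟨hi1, hk1⟩, fun h => h.elim hi2 hk2⟩
  · rintro ⟨k, ⟨h1, h2⟩, h3⟩
    push_neg at h3
    exact ⟨⟨_, h1, h3.1⟩, ⟨_, h2, h3.2⟩⟩

lemma IsZariskiConstructible.biInter_finset {ι : Type*} (s : Finset ι) (f : ι → Set V)
    (hf : ∀ j ∈ s, IsZariskiConstructible K (f j)) :
    IsZariskiConstructible K (⋂ j ∈ s, f j) := by
  classical
  induction s using Finset.induction with
  | empty => simpa using IsZariskiConstructible.univ
  | insert _ _ hj ih =>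
    rw [Finset.set_biInter_insert]
    exact (hf _ (Finset.mem_insert_self _ _)).inter
      (ih fun j hjs => hf j (Finset.mem_insert_of_mem hjs))

end Aux

/-- Lemma 3.6(3): AmAC classes are closed under countable intersections. If
`P^j = lim← P^j_i` are algebraic `m`-adically closed classes (inverse limits of constructible
subsets of the `B/m^i`), then `⋂_j P^j = lim← (⋂_{j ≤ i} P^j_i)`, and each `⋂_{j ≤ i} P^j_i`
is again constructible. -/
theorem AmAC_countable_intersection (K B : Type*) [Field K] [IsAlgClosed K]
    [Uncountable K] [CommRing B] [Algebra K B] [IsLocalRing B]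
    (P : ℕ → (i : ℕ) → Set (B ⧸ IsLocalRing.maximalIdeal B ^ i))
    (hconstr : ∀ j i, IsZariskiConstructible K (P j i))
    (hcompat : ∀ j i, Set.MapsTo
      (Ideal.Quotient.factor (S := IsLocalRing.maximalIdeal B ^ (i + 1))
        (T := IsLocalRing.maximalIdeal B ^ i) (Ideal.pow_le_pow_right (Nat.le_succ i)))
      (P j (i + 1)) (P j i)) :
    (⋂ j : ℕ, {b : B | ∀ i : ℕ,
        Ideal.Quotient.mk (IsLocalRing.maximalIdeal B ^ i) b ∈ P j i}) =
      {b : B | ∀ i : ℕ,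
        Ideal.Quotient.mk (IsLocalRing.maximalIdeal B ^ i) b ∈ ⋂ j ≤ i, P j i} ∧
    ∀ i : ℕ, IsZariskiConstructible K (⋂ j ≤ i, P j i) := by
  have down : ∀ (b : B) (j : ℕ) (k : ℕ), ∀ i ≤ k,
      Ideal.Quotient.mk (IsLocalRing.maximalIdeal B ^ k) b ∈ P j k →
      Ideal.Quotient.mk (IsLocalRing.maximalIdeal B ^ i) b ∈ P j i := by
    intro b j k
    induction k with
    | zero => intro i hi h; obtain rfl := Nat.le_zero.mp hi; exact h
    | succ k ih =>
      intro i hi h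
      rcases Nat.lt_succ_iff_lt_or_eq.mp (Nat.lt_succ_of_le hi) with h' | rfl
      · refine ih i (Nat.lt_succ_iff.mp h') ?_
        have := hcompat j k h
        rwa [Ideal.Quotient.factor_mk] at this
      · exact h
  constructor
  · ext b
    simp only [Set.mem_iInter, Set.mem_setOf_eq]
    constructor
    · intro h i j hji
      exact h j i
    · intro h j i
      exact down b j (max i j) i (le_max_left i j) (h (max i j) j (le_max_right i j))
  · intro i
    have : (⋂ j ≤ i, P j i) = ⋂ j ∈ Finset.Iic i, P j i := by
      simp [Finset.mem_Iic]
    rw [this]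
    exact IsZariskiConstructible.biInter_finset _ _ fun j _ => hconstr j i
end

section
/- Let K be an infinite field and R a Noetherian complete local K-algebra of dimension 1 with maximal ideal m, residue field K, multiplicity e, and m-torsion length t. For a suitable x ∈ m \ m² as in Noether normalization with √(x) = m, it holds for all k ≤ t (up to the point q where the lengths of (x^i)/(x^{i+1}) stabilize) that length(R/(x^{k+1})) ≥ (e+1)·k. -/
/-- The length of a module, defined as the Krull dimension of its lattice of submodules. -/
noncomputable def moduleLength (R M : Type*) [Ring R] [AddCommGroup M] [Module R M] :
    WithBot ℕ∞ :=
  Order.krullDim (Submodule R M)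

/-- The `m`-power torsion of `R`: elements annihilated by some power of `m`. -/
def mPowTorsion {R : Type*} [CommRing R] (m : Ideal R) : Submodule R R where
  carrier := {r : R | ∃ n : ℕ, ∀ a ∈ m ^ n, a * r = 0}
  zero_mem' := ⟨0, fun a _ => mul_zero a⟩
  add_mem' := by
    rintro x y ⟨n, hn⟩ ⟨k, hk⟩
    refine ⟨n + k, fun a ha => ?_⟩
    have h1 : a ∈ m ^ n := Ideal.pow_le_pow_right (Nat.le_add_right n k) ha
    have h2 : a ∈ m ^ k := Ideal.pow_le_pow_right (Nat.le_add_left k n) ha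
    rw [mul_add, hn a h1, hk a h2, add_zero]
  smul_mem' := by
    rintro c x ⟨n, hn⟩
    exact ⟨n, fun a ha => by rw [smul_eq_mul, mul_left_comm, hn a ha, mul_zero]⟩


open Order

section Lattice

lemma lech_height_add_one_le {α : Type*} [Preorder α] {u v : α} (h : u < v) :
    Order.height u + 1 ≤ Order.height v := by
  rcases eq_or_ne (Order.height u) ⊤ with htop | hfin
  · have : Order.height v = ⊤ := by
      have := Order.height_mono h.le
      rw [htop] at this
      exact top_le_iff.mp this
    simp [this]
  · exact Order.add_one_le_of_lt
      (Order.height_strictMono h (lt_of_le_of_ne le_top hfin))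

variable {α : Type*} [Lattice α] [IsModularLattice α]

/-- In a modular lattice, chain length is bounded by height of inf plus relative height of sup. -/
lemma lech_chain_le (a : α) : ∀ (n : ℕ) (p : LTSeries α), p.length = n →
    (p.length : ℕ∞) ≤ Order.height (p.last ⊓ a) +
      Order.height (⟨p.last ⊔ a, le_sup_right⟩ : {b : α // a ≤ b}) := by
  intro n
  induction n with
  | zero => intro p hp; rw [hp]; simp
  | succ n ih =>
      intro p hp
      have hne : p.length ≠ 0 := by omega
      set q := p.eraseLast with hq
      have hql : q.length = n := by simp [hq, RelSeries.eraseLast, hp]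
      have hlt : q.last < p.last := p.eraseLast_last_rel_last hne
      have IH := ih q hql
      rw [hql] at IH
      rw [hp]
      push_cast
      by_cases hinf : q.last ⊓ a < p.last ⊓ a
      · -- inf coordinate strictly increases
        have h1 : Order.height (q.last ⊓ a) + 1 ≤ Order.height (p.last ⊓ a) :=
          lech_height_add_one_le hinf
        have h2 : Order.height (⟨q.last ⊔ a, le_sup_right⟩ : {b : α // a ≤ b}) ≤
            Order.height (⟨p.last ⊔ a, le_sup_right⟩ : {b : α // a ≤ b}) := by
          apply Order.height_mono
          exact Subtype.mk_le_mk.mpr (sup_le_sup_right hlt.le a)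
        calc ((n : ℕ∞) + 1) ≤ (Order.height (q.last ⊓ a) +
              Order.height (⟨q.last ⊔ a, le_sup_right⟩ : {b : α // a ≤ b})) + 1 := by
              exact add_le_add_left IH 1
          _ = (Order.height (q.last ⊓ a) + 1) +
              Order.height (⟨q.last ⊔ a, le_sup_right⟩ : {b : α // a ≤ b}) := by ring
          _ ≤ _ := add_le_add h1 h2
      · -- then sup coordinate strictly increases, by modularity
        have hle : p.last ⊓ a ≤ q.last ⊓ a := by
          rcases lt_or_eq_of_le (inf_le_inf_right a hlt.le) with h | h
          · exact absurd h hinf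
          · exact h.ge
        have hsup : q.last ⊔ a < p.last ⊔ a :=
          sup_lt_sup_of_lt_of_inf_le_inf hlt hle
        have h1 : Order.height (⟨q.last ⊔ a, le_sup_right⟩ : {b : α // a ≤ b}) + 1 ≤
            Order.height (⟨p.last ⊔ a, le_sup_right⟩ : {b : α // a ≤ b}) :=
          lech_height_add_one_le (by exact Subtype.mk_lt_mk.mpr hsup)
        have h2 : Order.height (q.last ⊓ a) ≤ Order.height (p.last ⊓ a) :=
          Order.height_mono (inf_le_inf_right a hlt.le)
        calc ((n : ℕ∞) + 1) ≤ (Order.height (q.last ⊓ a) +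
              Order.height (⟨q.last ⊔ a, le_sup_right⟩ : {b : α // a ≤ b})) + 1 := by
              exact add_le_add_left IH 1
          _ = Order.height (q.last ⊓ a) +
              (Order.height (⟨q.last ⊔ a, le_sup_right⟩ : {b : α // a ≤ b}) + 1) := by ring
          _ ≤ _ := add_le_add h2 h1

end Lattice

open Order

section elen

variable (R : Type*) [Ring R]

/-- ℕ∞-valued module length. -/
noncomputable def elen (M : Type*) [AddCommGroup M] [Module R M] : ℕ∞ :=
  Order.height (⊤ : Submodule R M)

variable {M N : Type*} [AddCommGroup M] [Module R M] [AddCommGroup N] [Module R N]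

lemma moduleLength_eq_elen : moduleLength R M = (elen R M : WithBot ℕ∞) :=
  (Order.height_top_eq_krullDim).symm

lemma elen_eq_height (S : Submodule R M) : elen R S = Order.height S := by
  have h1 : elen R S = Order.height ((Submodule.MapSubtype.orderIso S) ⊤) :=
    (Order.height_orderIso (Submodule.MapSubtype.orderIso S) ⊤).symm
  have h2 : (Submodule.MapSubtype.orderIso S) ⊤ = ⟨S, le_rfl⟩ := by
    apply Subtype.ext
    simpa [Submodule.MapSubtype.orderIso] using Submodule.map_subtype_top S
  rw [h1, h2]
  apply le_antisymm
  · exact Order.height_le_height_apply_of_strictMono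
      (Subtype.val : {p' : Submodule R M // p' ≤ S} → Submodule R M)
      (fun a b h => h) _
  · apply Order.height_le
    intro p hp
    let q : LTSeries {p' : Submodule R M // p' ≤ S} :=
      ⟨p.length, fun i => ⟨p i, hp ▸ p.strictMono.monotone (Fin.le_last i)⟩,
        fun i => p.step i⟩
    have hq : q.last = ⟨S, le_rfl⟩ := Subtype.ext (by simpa [q, RelSeries.last] using hp)
    simpa [hq] using Order.length_le_height_last (p := q)

lemma elen_quotient (S : Submodule R M) :
    elen R (M ⧸ S) = Order.height (⟨⊤, le_top⟩ : {p : Submodule R M // S ≤ p}) := by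
  have h1 : elen R (M ⧸ S) = Order.height ((Submodule.comapMkQRelIso S) ⊤) :=
    (Order.height_orderIso (Submodule.comapMkQRelIso S) ⊤).symm
  have h2 : (Submodule.comapMkQRelIso S) ⊤ = ⟨⊤, show S ≤ ⊤ from le_top⟩ := by
    apply Subtype.ext
    simp [Submodule.comapMkQRelIso]
  rw [h1, h2]; rfl

lemma elen_sup_le (S : Submodule R M) :
    Order.height S + Order.height (⟨⊤, le_top⟩ : {p : Submodule R M // S ≤ p}) ≤
      elen R M := by
  have hco : Order.height (⟨⊤, le_top⟩ : {p : Submodule R M // S ≤ p}) ≤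
      Order.coheight S := by
    apply Order.height_le
    intro q _
    let r : LTSeries (Submodule R M) :=
      q.map (Subtype.val : {p : Submodule R M // S ≤ p} → Submodule R M)
        (fun a b h => h)
    have := Order.length_le_coheight (x := S) (p := r)
      (by exact (q.head).2)
    exact this
  have h0 : ((⨆ a : Submodule R M, Order.height a + Order.coheight a : ℕ∞) :
      WithBot ℕ∞) = (elen R M : WithBot ℕ∞) := by
    rw [← Order.krullDim_eq_iSup_height_add_coheight_of_nonempty,
      ← Order.height_top_eq_krullDim]
    rfl
  have h0' : (⨆ a : Submodule R M, Order.height a + Order.coheight a : ℕ∞) =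
      elen R M := WithBot.coe_injective h0
  calc Order.height S + Order.height (⟨⊤, le_top⟩ : {p : Submodule R M // S ≤ p})
      ≤ Order.height S + Order.coheight S := add_le_add_right hco _
    _ ≤ ⨆ a : Submodule R M, Order.height a + Order.coheight a :=
        le_iSup (fun a => Order.height a + Order.coheight a) S
    _ = elen R M := h0'

lemma elen_le_sup (S : Submodule R M) :
    elen R M ≤
      Order.height S + Order.height (⟨⊤, le_top⟩ : {p : Submodule R M // S ≤ p}) := by
  apply Order.height_le
  intro p hp
  have := lech_chain_le S p.length p rfl
  rw [hp] at this
  simpa [top_inf_eq, top_sup_eq] using this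

/-- Additivity of length. -/
lemma elen_add (S : Submodule R M) :
    elen R M = elen R S + elen R (M ⧸ S) := by
  rw [elen_eq_height, elen_quotient]
  exact le_antisymm (elen_le_sup R S) (elen_sup_le R S)

lemma elen_le_of_surjective (f : M →ₗ[R] N) (hf : Function.Surjective f) :
    elen R N ≤ elen R M := by
  have hmono : Monotone (Submodule.comap f) := fun a b h => Submodule.comap_mono h
  have hs : StrictMono (Submodule.comap f) :=
    hmono.strictMono_of_injective (Submodule.comap_injective_of_surjective hf)
  have := Order.height_le_height_apply_of_strictMono _ hs (⊤ : Submodule R N)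
  simpa [elen, Submodule.comap_top] using this

lemma elen_le_of_injective (f : M →ₗ[R] N) (hf : Function.Injective f) :
    elen R M ≤ elen R N := by
  have hmono : Monotone (Submodule.map f) := fun a b h => Submodule.map_mono h
  have hs : StrictMono (Submodule.map f) :=
    hmono.strictMono_of_injective (Submodule.map_injective_of_injective hf)
  have h1 := Order.height_le_height_apply_of_strictMono _ hs (⊤ : Submodule R M)
  exact le_trans h1 (Order.height_mono le_top)

lemma elen_congr (e : M ≃ₗ[R] N) : elen R M = elen R N :=
  le_antisymm (elen_le_of_injective R e.toLinearMap e.injective)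
    (elen_le_of_surjective R e.toLinearMap e.surjective)

lemma elen_eq_zero [Subsingleton M] : elen R M = 0 := by
  rw [elen, Order.height_eq_zero]
  intro b _
  have : b = ⊤ := by
    ext x
    simp [Subsingleton.elim x 0]
  exact this.ge

end elen
section quotients

variable {R : Type*} [CommRing R]

lemma elen_quot_mono {J J' : Ideal R} (h : J ≤ J') :
    elen R (R ⧸ J') ≤ elen R (R ⧸ J) := by
  apply elen_le_of_surjective R (Submodule.mapQ J J' LinearMap.id h)
  intro y
  obtain ⟨u, rfl⟩ := Submodule.mkQ_surjective J' y
  exact ⟨Submodule.mkQ J u, rfl⟩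

lemma elen_quot_add {J J' : Ideal R} (h : J ≤ J') :
    elen R (R ⧸ J) = elen R (Submodule.map J.mkQ J') + elen R (R ⧸ J') := by
  rw [elen_add R (Submodule.map J.mkQ J')]
  congr 1
  exact elen_congr R (Submodule.quotientQuotientEquivQuotient J J' h)

lemma elen_quot_top : elen R (R ⧸ (⊤ : Ideal R)) = 0 := by
  have : Subsingleton (R ⧸ (⊤ : Ideal R)) := by
    constructor
    intro a b
    obtain ⟨u, rfl⟩ := Submodule.mkQ_surjective _ a
    obtain ⟨v, rfl⟩ := Submodule.mkQ_surjective _ b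
    rw [Submodule.mkQ_apply, Submodule.mkQ_apply, Submodule.Quotient.eq]
    trivial
  exact elen_eq_zero R

lemma elen_quot_of_disjoint (p q : Ideal R) (h : p ⊓ q = ⊥) :
    elen R (R ⧸ q) = elen R p + elen R (R ⧸ (p ⊔ q)) := by
  have hle : q ≤ p ⊔ q := le_sup_right
  rw [elen_quot_add hle]
  congr 1
  -- Submodule.map q.mkQ (p ⊔ q) ≃ p
  have hmap : Submodule.map q.mkQ (p ⊔ q) = Submodule.map q.mkQ p := by
    rw [Submodule.map_sup]
    have : Submodule.map q.mkQ q = ⊥ := by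
      rw [← le_bot_iff, Submodule.map_le_iff_le_comap]
      intro u hu
      simp only [Submodule.mem_comap, Submodule.mem_bot, Submodule.mkQ_apply,
        Submodule.Quotient.mk_eq_zero]
      exact hu
    rw [this, sup_bot_eq]
  rw [hmap]
  symm
  have hinj : Function.Injective (q.mkQ.comp p.subtype) := by
    rw [← LinearMap.ker_eq_bot]
    rw [LinearMap.ker_comp]
    have : LinearMap.ker q.mkQ = q := Submodule.ker_mkQ q
    rw [this]
    rw [← le_bot_iff]
    intro u hu
    simp only [Submodule.mem_comap] at hu
    have : (u : R) ∈ p ⊓ q := ⟨u.2, hu⟩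
    rw [h] at this
    simpa using this
  have e1 : (↥p) ≃ₗ[R] LinearMap.range (q.mkQ.comp p.subtype) :=
    LinearEquiv.ofInjective _ hinj
  have e2 : LinearMap.range (q.mkQ.comp p.subtype) = Submodule.map q.mkQ p := by
    rw [LinearMap.range_comp, Submodule.range_subtype]
  rw [← e2]
  exact elen_congr R e1

end quotients

section chains

variable {R : Type*} [CommRing R] (C : Ideal R) (x : R)

/-- The descending chain of ideals `C + (x^j)`. -/
def lechJ (j : ℕ) : Ideal R := C ⊔ Ideal.span {x} ^ j

lemma lechJ_antitone {C : Ideal R} {x : R} {i j : ℕ} (h : i ≤ j) :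
    lechJ C x j ≤ lechJ C x i :=
  sup_le_sup_left (Ideal.pow_le_pow_right h) _

/-- The successive quotient `(C + (x^j))/(C + (x^(j+1)))`. -/
noncomputable def lechG (j : ℕ) : ℕ∞ :=
  elen R (Submodule.map (lechJ C x (j+1)).mkQ (lechJ C x j))

lemma lechL_succ (j : ℕ) :
    elen R (R ⧸ lechJ C x (j+1)) = lechG C x j + elen R (R ⧸ lechJ C x j) :=
  elen_quot_add (lechJ_antitone (Nat.le_succ j))

lemma lechL_zero : elen R (R ⧸ lechJ C x 0) = 0 := by
  have : lechJ C x 0 = ⊤ := by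
    simp [lechJ, Ideal.one_eq_top]
  rw [this]
  exact elen_quot_top

lemma lechL_eq_sum (n : ℕ) :
    elen R (R ⧸ lechJ C x n) = ∑ i ∈ Finset.range n, lechG C x i := by
  induction n with
  | zero => simpa using lechL_zero C x
  | succ n ih =>
      rw [lechL_succ, ih, Finset.sum_range_succ]
      ring

/-- Multiplication by `x` as a map between quotients. -/
noncomputable def xmulQ (J J' : Ideal R) (h : ∀ u ∈ J, x * u ∈ J') :
    (R ⧸ J) →ₗ[R] (R ⧸ J') :=
  Submodule.mapQ J J' (x • LinearMap.id)
    (fun u hu => by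
      simp only [Submodule.mem_comap, LinearMap.smul_apply, LinearMap.id_coe, id_eq,
        smul_eq_mul]
      exact h u hu)

lemma xmulQ_apply (J J' : Ideal R) (h : ∀ u ∈ J, x * u ∈ J') (u : R) :
    xmulQ x J J' h (Submodule.Quotient.mk u) = Submodule.Quotient.mk (x * u) := by
  rw [xmulQ, Submodule.mapQ_apply]
  simp [smul_eq_mul]

lemma lechJ_mul_mem {C : Ideal R} {x : R} {j : ℕ} :
    ∀ u ∈ lechJ C x j, x * u ∈ lechJ C x (j+1) := by
  intro u hu
  rcases Submodule.mem_sup.mp hu with ⟨c, hc, w, hw, rfl⟩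
  rw [mul_add]
  apply Submodule.add_mem
  · exact Submodule.mem_sup_left (Ideal.mul_mem_left _ x hc)
  · rw [Ideal.span_singleton_pow, Ideal.mem_span_singleton] at hw
    obtain ⟨v, rfl⟩ := hw
    apply Submodule.mem_sup_right
    rw [Ideal.span_singleton_pow, Ideal.mem_span_singleton]
    exact Dvd.intro v (by ring)

/-- Multiplication by `x` gives a surjection between successive quotients. -/
lemma lechG_antitone (j : ℕ) : lechG C x (j+1) ≤ lechG C x j := by
  set φ : (R ⧸ lechJ C x (j+1)) →ₗ[R] (R ⧸ lechJ C x (j+2)) :=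
    xmulQ x _ _ (lechJ_mul_mem (C := C) (x := x) (j := j+1)) with hφ
  have hmapsto : ∀ u ∈ Submodule.map (lechJ C x (j+1)).mkQ (lechJ C x j),
      φ u ∈ Submodule.map (lechJ C x (j+2)).mkQ (lechJ C x (j+1)) := by
    rintro _ ⟨u, hu, rfl⟩
    refine ⟨x * u, lechJ_mul_mem u hu, ?_⟩
    rw [Submodule.mkQ_apply, Submodule.mkQ_apply, hφ, xmulQ_apply]
  set f := φ.restrict hmapsto with hf
  apply elen_le_of_surjective R f
  rintro ⟨_, u, hu, rfl⟩
  rcases Submodule.mem_sup.mp hu with ⟨c, hc, w, hw, rfl⟩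
  rw [Ideal.span_singleton_pow, Ideal.mem_span_singleton] at hw
  obtain ⟨v, rfl⟩ := hw
  have hz : v * x ^ j ∈ lechJ C x j := by
    apply Submodule.mem_sup_right
    rw [Ideal.span_singleton_pow, Ideal.mem_span_singleton]
    exact Dvd.intro v (by ring)
  refine ⟨⟨(lechJ C x (j+1)).mkQ (v * x ^ j), ⟨v * x ^ j, hz, rfl⟩⟩, ?_⟩
  apply Subtype.ext
  simp only [hf, LinearMap.restrict_apply]
  show φ ((lechJ C x (j+1)).mkQ (v * x ^ j)) = (lechJ C x (j+2)).mkQ (c + x ^ (j+1) * v)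
  rw [Submodule.mkQ_apply, Submodule.mkQ_apply, hφ, xmulQ_apply]
  rw [Submodule.Quotient.eq]
  have heq : x * (v * x ^ j) - (c + x ^ (j+1) * v) = -c := by ring
  rw [heq]
  exact Submodule.neg_mem _ (Submodule.mem_sup_left hc)

lemma lechG_anti {C : Ideal R} {x : R} {i j : ℕ} (h : i ≤ j) :
    lechG C x j ≤ lechG C x i := by
  induction j with
  | zero => simpa [Nat.le_zero.mp h] using le_refl _
  | succ j ih =>
      rcases Nat.eq_or_lt_of_le h with rfl | h'
      · exact le_refl _
      · exact le_trans (lechG_antitone C x j) (ih (Nat.lt_succ_iff.mp h'))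

end chains
section exists_x

open IsLocalRing

variable {R : Type*} [CommRing R] [IsNoetherianRing R] [IsLocalRing R]

/-- If the Krull dimension is one, the maximal ideal is not contained in any minimal prime,
nor equal to its square (given Hausdorffness). -/
lemma lech_spectrum_not_subsingleton (hdim : ringKrullDim R = 1) :
    ¬ Subsingleton (PrimeSpectrum R) := by
  intro h
  have := Order.krullDim_nonpos_of_subsingleton (α := PrimeSpectrum R)
  rw [ringKrullDim] at hdim
  rw [hdim] at this
  norm_num at this

lemma lech_exists_param [IsAdicComplete (maximalIdeal R) R]
    (hdim : ringKrullDim R = 1) :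
    ∃ x ∈ maximalIdeal R, x ∉ maximalIdeal R ^ 2 ∧
      (Ideal.span {x}).radical = maximalIdeal R := by
  classical
  set m := maximalIdeal R with hm
  -- m ≠ m^2
  have hmsq : ¬ m ≤ m ^ 2 := by
    intro hle
    -- then m ≤ m^n for all n, so m = ⊥ by Hausdorff-ness
    have hpow : ∀ n : ℕ, m ≤ m ^ n := by
      intro n
      induction n with
      | zero => simp
      | succ n ih =>
          calc m ≤ m ^ 2 := hle
            _ = m * m := by ring
            _ ≤ m ^ n * m := Ideal.mul_mono ih le_rfl
            _ = m ^ (n + 1) := by ring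
    have hbot : m = ⊥ := by
      rw [eq_bot_iff]
      intro a ha
      have : a = 0 := by
        apply (inferInstance : IsHausdorff m R).haus a
        intro n
        rw [SModEq.zero]
        have hsmul : m ^ n • (⊤ : Submodule R R) = m ^ n := by
          apply le_antisymm
          · rw [Submodule.smul_le]
            intro r hr b _
            rw [smul_eq_mul]
            exact Ideal.mul_mem_right b _ hr
          · intro b hb
            have : b • (1 : R) ∈ m ^ n • (⊤ : Submodule R R) :=
              Submodule.smul_mem_smul hb trivial
            simpa using this
        rw [hsmul]
        exact hpow n ha
      simpa [this]
    -- then the spectrum is a singleton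
    apply lech_spectrum_not_subsingleton hdim
    constructor
    intro p q
    have hp : p.asIdeal = ⊥ := le_bot_iff.mp (hbot ▸ le_maximalIdeal p.isPrime.ne_top)
    have hq : q.asIdeal = ⊥ := le_bot_iff.mp (hbot ▸ le_maximalIdeal q.isPrime.ne_top)
    exact PrimeSpectrum.ext (hp.trans hq.symm)
  -- m not contained in any minimal prime
  have hmmin : ∀ p ∈ minimalPrimes R, ¬ m ≤ p := by
    intro p hp hle
    apply lech_spectrum_not_subsingleton hdim
    have hpm : p = m := le_antisymm (le_maximalIdeal hp.1.1.ne_top) hle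
    constructor
    intro q q'
    have key : ∀ r : PrimeSpectrum R, r.asIdeal = m := by
      intro r
      have h1 : r.asIdeal ≤ m := le_maximalIdeal r.isPrime.ne_top
      have h2 : p ≤ r.asIdeal := hp.2 ⟨r.isPrime, bot_le⟩ (hpm ▸ h1)
      exact le_antisymm h1 (hpm ▸ h2)
    exact PrimeSpectrum.ext ((key q).trans (key q').symm)
  -- prime avoidance
  have hfin : (minimalPrimes R).Finite := minimalPrimes.finite_of_isNoetherianRing R
  set s : Finset (Ideal R) := insert (m ^ 2) hfin.toFinset with hs
  have havoid : ¬ ((m : Set R) ⊆ ⋃ p ∈ (s : Set (Ideal R)), (p : Set R)) := by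
    intro hsub
    rw [Ideal.subset_union_prime (m ^ 2) (m ^ 2) ?_] at hsub
    · obtain ⟨p, hps, hle⟩ := hsub
      rw [hs, Finset.mem_insert] at hps
      rcases hps with rfl | hps
      · exact hmsq hle
      · exact hmmin p (hfin.mem_toFinset.mp hps) hle
    · intro p hps hp1 _
      rw [hs, Finset.mem_insert] at hps
      rcases hps with rfl | hps
      · exact absurd rfl hp1
      · exact (hfin.mem_toFinset.mp hps).1.1
  rw [Set.not_subset] at havoid
  obtain ⟨x, hxm, hxout⟩ := havoid
  refine ⟨x, hxm, ?_, ?_⟩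
  · intro hx2
    apply hxout
    apply Set.mem_biUnion (by simp [hs] : (m ^ 2) ∈ (s : Set (Ideal R))) hx2
  · -- radical of (x) is m
    have hxnotmin : ∀ p ∈ minimalPrimes R, x ∉ p := by
      intro p hp hxp
      apply hxout
      exact Set.mem_biUnion (by simp [hs, hfin.mem_toFinset, hp] :
        p ∈ (s : Set (Ideal R))) hxp
    rw [Ideal.radical_eq_sInf]
    apply le_antisymm
    · apply sInf_le
      refine ⟨?_, (inferInstance : (maximalIdeal R).IsMaximal).isPrime⟩
      rw [Ideal.span_le]
      simpa using hxm
    · apply le_sInf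
      rintro P ⟨hxP, hP⟩
      -- any prime containing x must be m
      have hPm : P ≤ m := le_maximalIdeal hP.ne_top
      by_contra hne
      have hPltm : P < m := lt_of_le_of_ne hPm (fun h => hne (h ▸ le_rfl))
      obtain ⟨q, hq, hqP⟩ := Ideal.exists_minimalPrimes_le (I := ⊥) (J := P) bot_le
      have hqlt : q < P := lt_of_le_of_ne hqP (by
        rintro rfl
        exact hxnotmin q hq (hxP (Ideal.mem_span_singleton_self x)))
      -- build a chain of length 2 in the prime spectrum
      haveI := hq.1.1
      let c : LTSeries (PrimeSpectrum R) :=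
        ((RelSeries.singleton _ ⟨q, hq.1.1⟩).snoc ⟨P, hP⟩ hqlt).snoc
          ⟨m, (inferInstance : (maximalIdeal R).IsMaximal).isPrime⟩
          (by show (_ : PrimeSpectrum R) < _; exact lt_of_eq_of_lt (RelSeries.last_snoc _ _ _) hPltm)
      have hlen := Order.LTSeries.length_le_krullDim c
      rw [← ringKrullDim, hdim] at hlen
      have : c.length = 2 := rfl
      rw [this] at hlen
      norm_num at hlen

end exists_x
section growth

open Filter

/-- If `len n / n → e` and `len n ≤ B + n * d` eventually, then `e ≤ d`. -/
lemma lech_growth {len : ℕ → ℕ} {e : ℕ}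
    (hmult : Filter.Tendsto (fun n : ℕ => (len n : ℝ) / (n : ℝ))
      Filter.atTop (nhds (e : ℝ)))
    {B d N : ℕ} (h : ∀ n ≥ N, len n ≤ B + n * d) : e ≤ d := by
  have hrhs : Filter.Tendsto (fun n : ℕ => (B : ℝ) / (n : ℝ) + (d : ℝ))
      Filter.atTop (nhds ((0 : ℝ) + d)) :=
    (tendsto_const_div_atTop_nhds_zero_nat (B : ℝ)).add tendsto_const_nhds
  rw [zero_add] at hrhs
  have hev : ∀ᶠ n : ℕ in Filter.atTop,
      (len n : ℝ) / (n : ℝ) ≤ (B : ℝ) / (n : ℝ) + (d : ℝ) := by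
    filter_upwards [Filter.eventually_ge_atTop (max N 1)] with n hn
    have hN : N ≤ n := le_trans (le_max_left _ _) hn
    have hn1 : (1 : ℕ) ≤ n := le_trans (le_max_right _ _) hn
    have hnpos : (0 : ℝ) < (n : ℝ) := by exact_mod_cast hn1
    have hle : (len n : ℝ) ≤ (B : ℝ) + (n : ℝ) * (d : ℝ) := by
      exact_mod_cast h n hN
    calc (len n : ℝ) / (n : ℝ) ≤ ((B : ℝ) + (n : ℝ) * (d : ℝ)) / (n : ℝ) :=
          by gcongr
      _ = (B : ℝ) / (n : ℝ) + (d : ℝ) := by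
          rw [add_div, mul_div_cancel_left₀ _ hnpos.ne']
  have := le_of_tendsto_of_tendsto hmult hrhs hev
  exact_mod_cast this

end growth
section mainaux

variable {R : Type*} [CommRing R]

lemma mem_mPowTorsion {m : Ideal R} {r : R} :
    r ∈ mPowTorsion m ↔ ∃ n : ℕ, ∀ a ∈ m ^ n, a * r = 0 := Iff.rfl

lemma lech_ideal_smul_top (I : Ideal R) : I • (⊤ : Submodule R R) = I := by
  apply le_antisymm
  · rw [Submodule.smul_le]
    intro r hr b _
    rw [smul_eq_mul]
    exact Ideal.mul_mem_right b _ hr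
  · intro b hb
    have : b • (1 : R) ∈ I • (⊤ : Submodule R R) := Submodule.smul_mem_smul hb trivial
    simpa using this

end mainaux

/-- Lemma 4.2(5): for a Noetherian complete local `K`-algebra `R` of dimension `1` with residue
field `K` infinite, multiplicity `e` and `m`-torsion length `t`, there is a suitable
`x ∈ m \ m²` with `√(x) = m` such that for all `k ≤ t`,
`length(R/(x^{k+1})) ≥ (e+1)·k`. -/
theorem dim_one_improved_lower_bound (K R : Type*) [Field K] [Infinite K]
    [CommRing R] [IsNoetherianRing R] [IsLocalRing R] [Algebra K R]
    [IsAdicComplete (IsLocalRing.maximalIdeal R) R]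
    (hres : Function.Bijective (algebraMap K (IsLocalRing.ResidueField R)))
    (hdim : ringKrullDim R = 1)
    (t : ℕ)
    (ht : moduleLength R ↥(mPowTorsion (IsLocalRing.maximalIdeal R)) = (t : ℕ∞))
    (len : ℕ → ℕ)
    (hlen : ∀ n, (len n : WithBot ℕ∞) =
      moduleLength R (R ⧸ (IsLocalRing.maximalIdeal R ^ (n + 1))))
    (e : ℕ)
    (hmult : Filter.Tendsto (fun n : ℕ => (len n : ℝ) / (n : ℝ))
      Filter.atTop (nhds (e : ℝ))) :
    ∃ x ∈ IsLocalRing.maximalIdeal R,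
      x ∉ IsLocalRing.maximalIdeal R ^ 2 ∧
      (Ideal.span {x}).radical = IsLocalRing.maximalIdeal R ∧
      ∀ k : ℕ, k ≤ t →
        (((e + 1) * k : ℕ) : WithBot ℕ∞) ≤
          moduleLength R (R ⧸ Ideal.span {x ^ (k + 1)}) := by
  classical
  obtain ⟨x, hxm, hxm2, hxrad⟩ := lech_exists_param hdim
  refine ⟨x, hxm, hxm2, hxrad, ?_⟩
  set m : Ideal R := IsLocalRing.maximalIdeal R with hmdef
  set T : Ideal R := mPowTorsion m with hTdef
  -- basic conversions
  have ht' : elen R T = (t : ℕ∞) := by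
    have := ht
    rw [moduleLength_eq_elen] at this
    exact_mod_cast this
  have hlen' : ∀ n : ℕ, elen R (R ⧸ (m ^ (n + 1) : Ideal R)) = (len n : ℕ∞) := by
    intro n
    have := (hlen n).symm
    rw [moduleLength_eq_elen] at this
    exact_mod_cast this
  have hxle : Ideal.span {x} ≤ m := by
    rwa [Ideal.span_le, Set.singleton_subset_iff]
  -- a power of m inside (x)
  obtain ⟨c, hc⟩ : ∃ c : ℕ, m ^ c ≤ Ideal.span {x} := by
    obtain ⟨c, hc⟩ := Ideal.exists_radical_pow_le_of_fg (I := Ideal.span {x})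
      (IsNoetherian.noetherian _)
    exact ⟨c, by rwa [hxrad] at hc⟩
  -- comparisons of the chains with powers of m
  have hm_le_J : ∀ (C : Ideal R) (n : ℕ), m ^ (c * n + 1) ≤ lechJ C x n := by
    intro C n
    calc m ^ (c * n + 1) ≤ m ^ (c * n) := Ideal.pow_le_pow_right (Nat.le_succ _)
      _ = (m ^ c) ^ n := by rw [← pow_mul]
      _ ≤ (Ideal.span {x}) ^ n := Ideal.pow_right_mono hc n
      _ ≤ lechJ C x n := le_sup_right
  have hJ_le_m : ∀ n : ℕ, lechJ (⊥ : Ideal R) x (n + 1) ≤ m ^ (n + 1) := by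
    intro n
    rw [lechJ, bot_sup_eq]
    exact Ideal.pow_right_mono hxle _
  -- finiteness
  have hfinL : ∀ (C : Ideal R) (n : ℕ), elen R (R ⧸ lechJ C x n) ≠ ⊤ := by
    intro C n
    have h1 := elen_quot_mono (hm_le_J C n)
    rw [hlen' (c * n)] at h1
    exact fun h => by simp [h] at h1
  have hfinG : ∀ (C : Ideal R) (j : ℕ), lechG C x j ≠ ⊤ := by
    intro C j
    have h1 : lechG C x j ≤ elen R (R ⧸ lechJ C x (j + 1)) := by
      rw [lechL_succ]
      exact le_self_add
    exact fun h => hfinL C (j + 1) (top_le_iff.mp (h ▸ h1))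
  -- natural number versions
  set L : ℕ → ℕ := fun n => (elen R (R ⧸ lechJ (⊥ : Ideal R) x n)).toNat with hLdef
  set G : ℕ → ℕ := fun j => (lechG (⊥ : Ideal R) x j).toNat with hGdef
  set LT : ℕ → ℕ := fun n => (elen R (R ⧸ lechJ T x n)).toNat with hLTdef
  set GT : ℕ → ℕ := fun j => (lechG T x j).toNat with hGTdef
  have hLcast : ∀ n, (L n : ℕ∞) = elen R (R ⧸ lechJ (⊥ : Ideal R) x n) :=
    fun n => ENat.coe_toNat (hfinL ⊥ n)
  have hGcast : ∀ j, (G j : ℕ∞) = lechG (⊥ : Ideal R) x j :=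
    fun j => ENat.coe_toNat (hfinG ⊥ j)
  have hLTcast : ∀ n, (LT n : ℕ∞) = elen R (R ⧸ lechJ T x n) :=
    fun n => ENat.coe_toNat (hfinL T n)
  have hGTcast : ∀ j, (GT j : ℕ∞) = lechG T x j :=
    fun j => ENat.coe_toNat (hfinG T j)
  -- sums
  have hLsum : ∀ n, L n = ∑ i ∈ Finset.range n, G i := by
    intro n
    have h1 := lechL_eq_sum (⊥ : Ideal R) x n
    have : ((L n : ℕ∞)) = ((∑ i ∈ Finset.range n, G i : ℕ) : ℕ∞) := by
      rw [hLcast, h1, Nat.cast_sum]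
      exact Finset.sum_congr rfl (fun i _ => (hGcast i).symm)
    exact_mod_cast this
  have hLTsum : ∀ n, LT n = ∑ i ∈ Finset.range n, GT i := by
    intro n
    have h1 := lechL_eq_sum T x n
    have : ((LT n : ℕ∞)) = ((∑ i ∈ Finset.range n, GT i : ℕ) : ℕ∞) := by
      rw [hLTcast, h1, Nat.cast_sum]
      exact Finset.sum_congr rfl (fun i _ => (hGTcast i).symm)
    exact_mod_cast this
  -- antitonicity, in ℕ
  have hGanti : ∀ {i j : ℕ}, i ≤ j → G j ≤ G i := by
    intro i j hij
    have := lechG_anti (C := (⊥ : Ideal R)) (x := x) hij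
    rw [← hGcast i, ← hGcast j] at this
    exact_mod_cast this
  have hGTanti : ∀ {i j : ℕ}, i ≤ j → GT j ≤ GT i := by
    intro i j hij
    have := lechG_anti (C := T) (x := x) hij
    rw [← hGTcast i, ← hGTcast j] at this
    exact_mod_cast this
  -- lower bound for L from the Hilbert function
  have hlow : ∀ n, len n ≤ L (n + 1) := by
    intro n
    have h1 := elen_quot_mono (hJ_le_m n)
    rw [hlen' n, ← hLcast (n + 1)] at h1
    exact_mod_cast h1
  -- uniform annihilator exponent for T
  obtain ⟨s, hs⟩ : ∃ s : ℕ, ∀ r ∈ T, ∀ a ∈ m ^ s, a * r = 0 := by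
    obtain ⟨S, hS⟩ := (IsNoetherian.noetherian T : T.FG)
    have hmem : ∀ g : R, g ∈ S → ∃ n : ℕ, ∀ a ∈ m ^ n, a * g = 0 := by
      intro g hg
      have : g ∈ T := hS ▸ Submodule.subset_span hg
      exact mem_mPowTorsion.mp this
    choose! nn hnn using hmem
    refine ⟨S.sup nn, ?_⟩
    have hT : T ≤ Submodule.colon ⊥ ((m ^ S.sup nn : Ideal R) : Set R) := by
      rw [← hS, Submodule.span_le]
      intro g hg
      rw [SetLike.mem_coe, Submodule.mem_colon]
      intro p hp
      have hp' : p ∈ m ^ nn g := Ideal.pow_le_pow_right (Finset.le_sup hg) hp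
      rw [smul_eq_mul, mul_comm]
      simpa using hnn g hg p hp'
    intro r hr a ha
    have := Submodule.mem_colon.mp (hT hr) a ha
    rw [smul_eq_mul, mul_comm] at this
    simpa using this
  have hxs : ∀ r ∈ T, x ^ s * r = 0 :=
    fun r hr => hs r hr _ (Ideal.pow_mem_pow hxm s)
  -- kernel of multiplication by x-powers lies in T
  have hker : ∀ (n : ℕ) (r : R), x ^ n * r = 0 → r ∈ T := by
    intro n r hr
    rw [hTdef, mem_mPowTorsion]
    refine ⟨c * n, ?_⟩
    intro a ha
    have hle : m ^ (c * n) ≤ (Ideal.span {x}) ^ n := by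
      calc m ^ (c * n) = (m ^ c) ^ n := by rw [← pow_mul]
        _ ≤ (Ideal.span {x}) ^ n := Ideal.pow_right_mono hc n
    have ha' : a ∈ Ideal.span {x ^ n} := by
      rw [← Ideal.span_singleton_pow]
      exact hle ha
    rw [Ideal.mem_span_singleton] at ha'
    obtain ⟨v, rfl⟩ := ha'
    calc x ^ n * v * r = v * (x ^ n * r) := by ring
      _ = 0 := by rw [hr, mul_zero]
  -- disjointness with powers of x
  have hdisjx : ∀ n : ℕ, s ≤ n → T ⊓ lechJ (⊥ : Ideal R) x n = ⊥ := by
    intro n hn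
    rw [eq_bot_iff]
    rintro a ⟨haT, haJ⟩
    rw [lechJ, bot_sup_eq, Ideal.span_singleton_pow, SetLike.mem_coe,
      Ideal.mem_span_singleton] at haJ
    obtain ⟨v, rfl⟩ := haJ
    have hv : v ∈ T := by
      apply hker (n + s) v
      have := hxs _ haT
      calc x ^ (n + s) * v = x ^ s * (x ^ n * v) := by ring
        _ = 0 := this
    have : x ^ n * v = 0 := by
      calc x ^ n * v = x ^ (n - s) * (x ^ s * v) := by
            rw [← mul_assoc, ← pow_add, Nat.sub_add_cancel hn]
        _ = x ^ (n - s) * 0 := by rw [hxs v hv]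
        _ = 0 := mul_zero _
    simp [this]
  -- Artin-Rees and disjointness with powers of m
  obtain ⟨ka, hka⟩ := Ideal.exists_pow_inf_eq_pow_smul m (T : Submodule R R)
  have hdisjm : ∀ n : ℕ, ka + s ≤ n → T ⊓ m ^ n = ⊥ := by
    intro n hn
    have h1 := hka n (le_trans (Nat.le_add_right _ _) hn)
    rw [lech_ideal_smul_top] at h1
    have h2 : m ^ (n - ka) • (m ^ ka • (⊤ : Submodule R R) ⊓ T) = ⊥ := by
      rw [eq_bot_iff, Submodule.smul_le]
      intro a ha r hr
      have haS : a ∈ m ^ s :=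
        Ideal.pow_le_pow_right (by omega) ha
      rw [Submodule.mem_bot, smul_eq_mul]
      exact hs r hr.2 a haS
    rw [inf_comm]
    rw [h1, h2]
  -- splitting off the torsion: x-side
  have hsplit_x : ∀ n : ℕ, s ≤ n →
      elen R (R ⧸ lechJ (⊥ : Ideal R) x n) = (t : ℕ∞) + elen R (R ⧸ lechJ T x n) := by
    intro n hn
    have h1 := elen_quot_of_disjoint T (lechJ (⊥ : Ideal R) x n) (hdisjx n hn)
    rw [ht'] at h1
    have h2 : T ⊔ lechJ (⊥ : Ideal R) x n = lechJ T x n := by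
      rw [lechJ, lechJ, ← sup_assoc, sup_bot_eq]
    rw [h2] at h1
    exact h1
  -- splitting off the torsion: m-side
  have hsplit_m : ∀ n : ℕ, ka + s ≤ n + 1 →
      (len n : ℕ∞) ≤ (t : ℕ∞) + elen R (R ⧸ lechJ T x (n + 1)) := by
    intro n hn
    have h1 := elen_quot_of_disjoint T (m ^ (n + 1)) (hdisjm (n + 1) hn)
    rw [ht', hlen' n] at h1
    have h2 : lechJ T x (n + 1) ≤ T ⊔ m ^ (n + 1) :=
      sup_le_sup_left (Ideal.pow_right_mono hxle (n + 1)) T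
    have h3 := elen_quot_mono h2
    rw [h1]
    exact add_le_add_right h3 _
  -- growth estimates : e ≤ G j
  have hGe : ∀ j : ℕ, e ≤ G j := by
    intro j
    apply lech_growth hmult (B := t + L (j + 1)) (d := G j) (N := j + 1)
    intro n hn
    have h1 : L (n + 1) = L (j + 1) + ∑ i ∈ Finset.Ico (j + 1) (n + 1), G i := by
      rw [hLsum, hLsum, Finset.range_eq_Ico,
        ← Finset.sum_Ico_consecutive _ (Nat.zero_le (j + 1)) (by omega), Finset.range_eq_Ico]
    have h2 : ∑ i ∈ Finset.Ico (j + 1) (n + 1), G i ≤ n * G j := by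
      calc ∑ i ∈ Finset.Ico (j + 1) (n + 1), G i
          ≤ (Finset.Ico (j + 1) (n + 1)).card • G j := by
            apply Finset.sum_le_card_nsmul
            intro i hi
            simp only [Finset.mem_Ico] at hi
            exact hGanti (by omega : j ≤ i)
        _ = (n - j) * G j := by rw [Nat.card_Ico, smul_eq_mul]; congr 1; omega
        _ ≤ n * G j := Nat.mul_le_mul_right _ (by omega)
    calc len n ≤ L (n + 1) := hlow n
      _ ≤ t + L (j + 1) + n * G j := by omega
  have hGTe : ∀ j : ℕ, e ≤ GT j := by
    intro j
    apply lech_growth hmult (B := t + LT (j + 1)) (d := GT j) (N := max (j + 1) (ka + s))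
    intro n hn
    have hn1 : j + 1 ≤ n := le_trans (le_max_left _ _) hn
    have hn2 : ka + s ≤ n := le_trans (le_max_right _ _) hn
    have h0 : len n ≤ t + LT (n + 1) := by
      have := hsplit_m n (by omega : ka + s ≤ n + 1)
      rw [← hLTcast (n + 1)] at this
      exact_mod_cast this
    have h1 : LT (n + 1) = LT (j + 1) + ∑ i ∈ Finset.Ico (j + 1) (n + 1), GT i := by
      rw [hLTsum, hLTsum, Finset.range_eq_Ico,
        ← Finset.sum_Ico_consecutive _ (Nat.zero_le (j + 1))
          (by omega : j + 1 ≤ n + 1), Finset.range_eq_Ico]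
    have h2 : ∑ i ∈ Finset.Ico (j + 1) (n + 1), GT i ≤ n * GT j := by
      calc ∑ i ∈ Finset.Ico (j + 1) (n + 1), GT i
          ≤ (Finset.Ico (j + 1) (n + 1)).card • GT j := by
            apply Finset.sum_le_card_nsmul
            intro i hi
            simp only [Finset.mem_Ico] at hi
            exact hGTanti (by omega : j ≤ i)
        _ = (n - j) * GT j := by rw [Nat.card_Ico, smul_eq_mul]; congr 1; omega
        _ ≤ n * GT j := Nat.mul_le_mul_right _ (by omega)
    omega
  -- asymptotic lower bound with the torsion
  have hbig : ∀ n : ℕ, s ≤ n + 1 → t + (n + 1) * e ≤ L (n + 1) := by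
    intro n hn
    have h1 : L (n + 1) = t + LT (n + 1) := by
      have := hsplit_x (n + 1) hn
      rw [← hLcast (n + 1), ← hLTcast (n + 1)] at this
      exact_mod_cast this
    have h2 : (n + 1) * e ≤ LT (n + 1) := by
      rw [hLTsum]
      calc (n + 1) * e = (Finset.range (n + 1)).card • e := by
            rw [Finset.card_range, smul_eq_mul]
        _ ≤ ∑ i ∈ Finset.range (n + 1), GT i :=
            Finset.card_nsmul_le_sum _ _ _ (fun i _ => hGTe i)
    omega
  -- main argument
  intro k hk
  have hspan : Ideal.span {x ^ (k + 1)} = lechJ (⊥ : Ideal R) x (k + 1) := by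
    rw [lechJ, bot_sup_eq, Ideal.span_singleton_pow]
  have hmain : (e + 1) * k ≤ L (k + 1) := by
    by_cases hcase : e + 1 ≤ G k
    · have h1 : (k + 1) * (e + 1) ≤ L (k + 1) := by
        rw [hLsum]
        calc (k + 1) * (e + 1) = (Finset.range (k + 1)).card • (e + 1) := by
              rw [Finset.card_range, smul_eq_mul]
          _ ≤ ∑ i ∈ Finset.range (k + 1), G i :=
              Finset.card_nsmul_le_sum _ _ _
                (fun i hi => le_trans hcase (hGanti (by
                  simp only [Finset.mem_range] at hi; omega : i ≤ k)))
      nlinarith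
    · have hGk : G k ≤ e := by omega
      set n : ℕ := k + s + ka with hndef
      have h1 : L (n + 1) = L (k + 1) + ∑ i ∈ Finset.Ico (k + 1) (n + 1), G i := by
        rw [hLsum, hLsum, Finset.range_eq_Ico,
          ← Finset.sum_Ico_consecutive _ (Nat.zero_le (k + 1))
            (by omega : k + 1 ≤ n + 1), Finset.range_eq_Ico]
      have h2 : ∑ i ∈ Finset.Ico (k + 1) (n + 1), G i = (n - k) * e := by
        rw [Finset.sum_congr rfl (fun i hi => ?_), Finset.sum_const, Nat.card_Ico,
          smul_eq_mul]
        · congr 1; omega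
        · simp only [Finset.mem_Ico] at hi
          exact le_antisymm (le_trans (hGanti (by omega : k ≤ i)) hGk) (hGe i)
      have h3 : t + (n + 1) * e ≤ L (n + 1) := hbig n (by omega)
      have h4 : (n + 1) * e = (k + 1) * e + (n - k) * e := by
        rw [← Nat.add_mul]
        congr 1
        omega
      have h5 : t + (k + 1) * e ≤ L (k + 1) := by omega
      nlinarith
  rw [hspan, moduleLength_eq_elen, ← hLcast (k + 1)]
  exact_mod_cast hmain
end
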